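/- For the second-kind half-line quantum walk with coin parameters γ_j = 1/(r+j) (j ≥ 1) and off-diagonal coin at the origin, the bottom localization degenerates to the rightmost site: lim_{n→∞} μ_n(n) = r/(r+1), and for every fixed j ≥ 1, lim_{n→∞} μ_n(n−j) = 0. -/

import Mathlib

open Filter Topology Matrix

/-- Coin parameter `γ_j = 1/(r+j)`. -/
noncomputable def gam (r : ℝ) (j : ℕ) : ℝ := 1 / (r + j)

/-- `ρ_j = √(1 - γ_j²)`. -/
noncomputable def rho (r : ℝ) (j : ℕ) : ℝ := Real.sqrt (1 - gam r j ^ 2)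

/-- `P_j = [[ρ_j, γ_j], [0, 0]]` (used for `j ≥ 1`). -/
noncomputable def Pmat (r : ℝ) (j : ℕ) : Matrix (Fin 2) (Fin 2) ℂ :=
  !![(rho r j : ℂ), (gam r j : ℂ); 0, 0]

/-- `Q_j = [[0, 0], [−γ_j, ρ_j]]` for `j ≥ 1`, and the off-diagonal-coin value
`Q_0 = [[0, 0], [1, 0]]` at the origin. -/
noncomputable def Qmat (r : ℝ) : ℕ → Matrix (Fin 2) (Fin 2) ℂ
  | 0 => !![0, 0; 1, 0]
  | j + 1 => !![0, 0; (-(gam r (j + 1)) : ℂ), (rho r (j + 1) : ℂ)]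

/-- Weight matrices `Ξ_n(j)` of the second-kind half-line quantum walk with
coin parameters `γ_j = 1/(r+j)` (`j ≥ 1`) and off-diagonal coin at the origin. -/
noncomputable def Xi (r : ℝ) : ℕ → ℕ → Matrix (Fin 2) (Fin 2) ℂ
  | 0, 0 => 1
  | 0, _ + 1 => 0
  | n + 1, 0 => Pmat r 1 * Xi r n 1
  | n + 1, j + 1 => Pmat r (j + 2) * Xi r n (j + 2) + Qmat r j * Xi r n j

/-- Position distribution `μ_n(j) = ‖Ξ_n(j) φ_0‖²` for the initial coin state
`φ_0 = (1, 0)` (squared Euclidean norm of `ℂ²`). -/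
noncomputable def mu (r : ℝ) (n j : ℕ) : ℝ :=
  ‖(Xi r n j).mulVec ![1, 0] 0‖ ^ 2
    + ‖(Xi r n j).mulVec ![1, 0] 1‖ ^ 2

noncomputable def Cp (r : ℝ) : ℕ → ℝ
  | 0 => 1
  | j + 1 => Cp r j * rho r (j + 1)

section
variable {r : ℝ} (hr : 1 < r)
include hr

lemma radd_pos (m : ℕ) : 0 < r + m := by
  have : (0:ℝ) ≤ m := Nat.cast_nonneg m; linarith

lemma gam_pos (m : ℕ) : 0 < gam r m := by
  unfold gam; exact one_div_pos.mpr (radd_pos hr m)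

lemma gam_lt_one (m : ℕ) : gam r m < 1 := by
  unfold gam
  rw [div_lt_one (radd_pos hr m)]
  have : (0:ℝ) ≤ m := Nat.cast_nonneg m; linarith

lemma gam_succ_le (m : ℕ) : gam r (m + 1) ≤ gam r m := by
  unfold gam
  apply one_div_le_one_div_of_le (radd_pos hr m)
  push_cast; linarith

lemma rho_sq (m : ℕ) : rho r m ^ 2 = 1 - gam r m ^ 2 := by
  unfold rho
  exact Real.sq_sqrt (by nlinarith [gam_pos hr m, gam_lt_one hr m])

omit hr in
lemma rho_nonneg (m : ℕ) : 0 ≤ rho r m := Real.sqrt_nonneg _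

lemma rho_le_one (m : ℕ) : rho r m ≤ 1 := by
  unfold rho
  exact Real.sqrt_le_one.mpr (by nlinarith [gam_pos hr m])

lemma Cp_nonneg (m : ℕ) : 0 ≤ Cp r m := by
  induction m with
  | zero => norm_num [Cp]
  | succ k ih => rw [Cp]; exact mul_nonneg ih (rho_nonneg _)

lemma Cp_le_one (m : ℕ) : Cp r m ≤ 1 := by
  induction m with
  | zero => norm_num [Cp]
  | succ k ih =>
    rw [Cp]
    calc Cp r k * rho r (k+1) ≤ 1 * 1 :=
      mul_le_mul ih (rho_le_one hr _) (rho_nonneg _) one_pos.le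
    _ = 1 := by ring

lemma id2 (m : ℕ) : rho r m ^ 2 * gam r (m + 1) + gam r m ^ 2 = gam r m := by
  rw [rho_sq hr]
  unfold gam
  have h1 : r + (m:ℝ) ≠ 0 := ne_of_gt (radd_pos hr m)
  have h2 : r + (m:ℝ) + 1 ≠ 0 := by
    have := radd_pos hr (m + 1); push_cast at this; linarith
  push_cast
  rw [show r + ((m:ℝ) + 1) = r + (m:ℝ) + 1 by ring]
  field_simp
  ring

lemma id3 (m : ℕ) : gam r m * (1 - gam r (m + 1)) = gam r (m + 1) := by
  unfold gam
  have h1 : r + (m:ℝ) ≠ 0 := ne_of_gt (radd_pos hr m)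
  have h2 : r + (m:ℝ) + 1 ≠ 0 := by
    have := radd_pos hr (m + 1); push_cast at this; linarith
  push_cast
  rw [show r + ((m:ℝ) + 1) = r + (m:ℝ) + 1 by ring]
  field_simp
  ring

lemma Cp_sq (m : ℕ) : Cp r m ^ 2 = r * (r + m + 1) / ((r + 1) * (r + m)) := by
  induction m with
  | zero => rw [Cp]; push_cast; field_simp; ring
  | succ k ih =>
    have h1 : r + (k:ℝ) ≠ 0 := ne_of_gt (radd_pos hr k)
    have h2 : r + (k:ℝ) + 1 ≠ 0 := by
      have := radd_pos hr (k + 1); push_cast at this; linarith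
    have h3 : r + 1 ≠ 0 := by linarith [hr]
    rw [Cp, mul_pow, ih, rho_sq hr]
    unfold gam
    push_cast
    rw [show r + ((k:ℝ) + 1) = r + (k:ℝ) + 1 by ring]
    field_simp
    ring

lemma topid (k : ℕ) :
    rho r (k + 2) * (gam r (k + 3) * Cp r (k + 2)) +
      gam r (k + 2) * (gam r (k + 2) * Cp r (k + 1)) = gam r (k + 2) * Cp r (k + 1) := by
  have h : rho r (k + 2) ^ 2 * gam r (k + 3) + gam r (k + 2) ^ 2 = gam r (k + 2) :=
    id2 hr (k + 2)
  rw [show Cp r (k + 2) = Cp r (k + 1) * rho r (k + 2) from rfl]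
  linear_combination Cp r (k + 1) * h

lemma botid (m : ℕ) :
    -(gam r (m + 1)) * (gam r (m + 2) * Cp r (m + 1)) +
      rho r (m + 1) * (gam r (m + 1) * Cp r m) = gam r (m + 2) * Cp r (m + 1) := by
  have h : gam r (m + 1) * (1 - gam r (m + 2)) = gam r (m + 2) := id3 hr (m + 1)
  rw [show Cp r (m + 1) = Cp r m * rho r (m + 1) from rfl]
  linear_combination (Cp r m * rho r (m + 1)) * h

lemma originid : rho r 1 * (gam r 2 * Cp r 1) + gam r 1 * (gam r 1 * Cp r 0) = gam r 1 := by
  have h : rho r 1 ^ 2 * gam r 2 + gam r 1 ^ 2 = gam r 1 := id2 hr 1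
  rw [show Cp r 1 = Cp r 0 * rho r 1 from rfl, show Cp r 0 = 1 from rfl]
  linear_combination h

end

lemma P_mulVec (r : ℝ) (j : ℕ) (u v : ℂ) :
    (Pmat r j).mulVec ![u, v] = ![(rho r j : ℂ) * u + (gam r j : ℂ) * v, 0] := by
  funext i
  fin_cases i <;> simp [Pmat, Matrix.mulVec, dotProduct, Fin.sum_univ_two]

lemma Q0_mulVec (r : ℝ) (u v : ℂ) : (Qmat r 0).mulVec ![u, v] = ![0, u] := by
  funext i
  fin_cases i <;> simp [Qmat, Matrix.mulVec, dotProduct, Fin.sum_univ_two]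

lemma Qs_mulVec (r : ℝ) (j : ℕ) (u v : ℂ) :
    (Qmat r (j + 1)).mulVec ![u, v] =
      ![0, -(gam r (j + 1) : ℂ) * u + (rho r (j + 1) : ℂ) * v] := by
  funext i
  fin_cases i <;> simp [Qmat, Matrix.mulVec, dotProduct, Fin.sum_univ_two]

lemma Xi_eq_zero (r : ℝ) : ∀ n j, n < j → Xi r n j = 0 := by
  intro n
  induction n with
  | zero =>
    intro j hj
    obtain ⟨k, rfl⟩ : ∃ k, j = k + 1 := ⟨j - 1, by omega⟩
    rfl
  | succ n ih =>
    intro j hj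
    obtain ⟨k, rfl⟩ : ∃ k, j = k + 1 := ⟨j - 1, by omega⟩
    show Pmat r (k + 2) * Xi r n (k + 2) + Qmat r k * Xi r n k = 0
    rw [ih _ (by omega), ih _ (by omega), mul_zero, mul_zero, add_zero]

lemma wmain {r : ℝ} (hr : 1 < r) : ∀ n : ℕ,
    (∀ j, j % 2 ≠ n % 2 → (Xi r n j).mulVec ![1, 0] = 0) ∧
    (∀ k, n = k + 1 → (Xi r n n).mulVec ![1, 0] = ![0, ((Cp r k : ℝ) : ℂ)]) ∧
    (∀ k, k + 1 < n → (k + 1) % 2 = n % 2 → (Xi r n (k + 1)).mulVec ![1, 0] =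
      ![((gam r (k + 2) * Cp r (k + 1) : ℝ) : ℂ), ((gam r (k + 1) * Cp r k : ℝ) : ℂ)]) ∧
    (1 ≤ n → n % 2 = 0 → (Xi r n 0).mulVec ![1, 0] = ![((gam r 1 : ℝ) : ℂ), 0]) := by
  intro n
  induction n with
  | zero =>
    refine ⟨?_, ?_, ?_, ?_⟩
    · intro j hj
      obtain ⟨t, rfl⟩ : ∃ t, j = t + 1 := ⟨j - 1, by omega⟩
      show (Xi r 0 (t + 1)).mulVec ![1, 0] = 0
      rw [show Xi r 0 (t + 1) = 0 from rfl, Matrix.zero_mulVec]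
    · intro k hk; omega
    · intro k hk; omega
    · intro h; omega
  | succ n ih =>
    obtain ⟨ih1, ih2, ih3, ih4⟩ := ih
    have hXi0 : ∀ j, (Xi r (n + 1) (j + 1)).mulVec ![1, 0] =
        (Pmat r (j + 2)).mulVec ((Xi r n (j + 2)).mulVec ![1, 0]) +
        (Qmat r j).mulVec ((Xi r n j).mulVec ![1, 0]) := by
      intro j
      rw [show Xi r (n + 1) (j + 1) =
        Pmat r (j + 2) * Xi r n (j + 2) + Qmat r j * Xi r n j from rfl]
      rw [Matrix.add_mulVec, Matrix.mulVec_mulVec, Matrix.mulVec_mulVec]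
    have hXiO : (Xi r (n + 1) 0).mulVec ![1, 0] =
        (Pmat r 1).mulVec ((Xi r n 1).mulVec ![1, 0]) := by
      rw [show Xi r (n + 1) 0 = Pmat r 1 * Xi r n 1 from rfl, Matrix.mulVec_mulVec]
    refine ⟨?_, ?_, ?_, ?_⟩
    · -- parity
      intro j hj
      cases j with
      | zero =>
        rw [hXiO, ih1 1 (by omega), Matrix.mulVec_zero]
      | succ k =>
        rw [hXi0, ih1 (k + 2) (by omega), ih1 k (by omega),
          Matrix.mulVec_zero, Matrix.mulVec_zero, add_zero]
    · -- top site
      intro k hk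
      have hk' : k = n := by omega
      subst hk'
      rw [hXi0, Xi_eq_zero r k (k + 2) (by omega), Matrix.zero_mulVec,
        Matrix.mulVec_zero, zero_add]
      cases k with
      | zero =>
        rw [show Xi r 0 0 = 1 from rfl, Matrix.one_mulVec, Q0_mulVec]
        funext i; fin_cases i <;> simp [Cp]
      | succ m =>
        rw [ih2 m rfl, Qs_mulVec]
        funext i; fin_cases i <;> simp [Cp]
        push_cast
        ring
    · -- interior
      intro k hk hpar
      have hk2 : k + 2 ≤ n := by omega
      rw [hXi0]
      -- the vector at j = k+2
      have htop : (Pmat r (k + 2)).mulVec ((Xi r n (k + 2)).mulVec ![1, 0]) =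
          ![((gam r (k + 2) * Cp r (k + 1) : ℝ) : ℂ), 0] := by
        rcases eq_or_lt_of_le hk2 with he | hlt
        · rw [show Xi r n (k + 2) = Xi r n n by rw [he], ih2 (k + 1) he.symm, P_mulVec]
          funext i; fin_cases i <;> push_cast <;> simp
        · have h3 := ih3 (k + 1) (by omega) (by omega)
          rw [show k + 1 + 1 = k + 2 from rfl, show k + 1 + 2 = k + 3 from rfl] at h3
          rw [h3, P_mulVec]
          have hid := topid hr k
          funext i; fin_cases i
          · show (rho r (k + 2) : ℂ) * ((gam r (k + 3) * Cp r (k + 2) : ℝ) : ℂ) +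
              (gam r (k + 2) : ℂ) * ((gam r (k + 2) * Cp r (k + 1) : ℝ) : ℂ) =
              ((gam r (k + 2) * Cp r (k + 1) : ℝ) : ℂ)
            norm_cast
          · rfl
      rw [htop]
      cases k with
      | zero =>
        rw [ih4 (by omega) (by omega), Q0_mulVec]
        funext i; fin_cases i <;> push_cast <;>
          simp [show Cp r 0 = 1 from rfl]
      | succ m =>
        rw [ih3 m (by omega) (by omega), Qs_mulVec]
        have hid := botid hr m
        funext i; fin_cases i
        · show ((gam r (m + 1 + 2) * Cp r (m + 1 + 1) : ℝ) : ℂ) + 0 =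
            ((gam r (m + 1 + 2) * Cp r (m + 1 + 1) : ℝ) : ℂ)
          ring
        · show (0 : ℂ) + (-(gam r (m + 1) : ℂ) * ((gam r (m + 2) * Cp r (m + 1) : ℝ) : ℂ) +
              (rho r (m + 1) : ℂ) * ((gam r (m + 1) * Cp r m : ℝ) : ℂ)) =
            ((gam r (m + 1 + 1) * Cp r (m + 1) : ℝ) : ℂ)
          rw [show m + 1 + 1 = m + 2 from rfl]
          norm_cast
          linear_combination hid
    · -- origin
      intro _ hpar
      rw [hXiO]
      rcases Nat.lt_or_ge 1 n with hlt | hle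
      · rw [ih3 0 hlt (by omega), P_mulVec]
        have hid := originid hr
        funext i; fin_cases i
        · show (rho r 1 : ℂ) * ((gam r 2 * Cp r 1 : ℝ) : ℂ) +
            (gam r 1 : ℂ) * ((gam r 1 * Cp r 0 : ℝ) : ℂ) = ((gam r 1 : ℝ) : ℂ)
          norm_cast
        · rfl
      · have hn1 : n = 1 := by omega
        subst hn1
        rw [ih2 0 rfl, P_mulVec]
        funext i; fin_cases i <;> simp [Cp]

lemma mu_top {r : ℝ} (hr : 1 < r) (n : ℕ) : mu r (n + 1) (n + 1) = Cp r n ^ 2 := by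
  unfold mu
  rw [(wmain hr (n + 1)).2.1 n rfl]
  simp [Complex.norm_real, sq_abs]

/-- Degenerate bottom localization for the second-kind walk:
`lim_{n→∞} μ_n(n) = r/(r+1)` and `lim_{n→∞} μ_n(n−j) = 0` for every fixed `j ≥ 1`. -/
theorem bottom_localization_second_kind (r : ℝ) (hr : 1 < r) :
    Tendsto (fun n : ℕ => mu r n n) atTop (nhds (r / (r + 1))) ∧
    ∀ j : ℕ, 1 ≤ j → Tendsto (fun n : ℕ => mu r n (n - j)) atTop (nhds 0) := by
  have hr1 : r + 1 ≠ 0 := by linarith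
  have hatop : Tendsto (fun m : ℕ => r + (m : ℝ)) atTop atTop :=
    tendsto_atTop_add_const_left _ r tendsto_natCast_atTop_atTop
  have hinv : Tendsto (fun m : ℕ => (r + (m : ℝ))⁻¹) atTop (nhds 0) :=
    hatop.inv_tendsto_atTop
  constructor
  · rw [← tendsto_add_atTop_iff_nat 1]
    have key : ∀ n : ℕ, mu r (n + 1) (n + 1) = r / (r + 1) * (1 + (r + (n : ℝ))⁻¹) := by
      intro n
      rw [mu_top hr, Cp_sq hr]
      have h1 : r + (n : ℝ) ≠ 0 := ne_of_gt (radd_pos hr n)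
      field_simp
    have h3 : Tendsto (fun n : ℕ => r / (r + 1) * (1 + (r + (n : ℝ))⁻¹)) atTop
        (nhds (r / (r + 1) * (1 + 0))) :=
      (tendsto_const_nhds.add hinv).const_mul _
    rw [add_zero, mul_one] at h3
    exact h3.congr fun n => (key n).symm
  · intro j hj
    have hg : Tendsto (fun m : ℕ => 2 * gam r m ^ 2) atTop (nhds 0) := by
      have h2 : Tendsto (fun m : ℕ => gam r m) atTop (nhds 0) := by
        simpa [gam, one_div] using hinv
      have := (h2.pow 2).const_mul 2
      simpa using this
    apply squeeze_zero' (g := fun n : ℕ => 2 * gam r (n - j) ^ 2)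
    · exact Eventually.of_forall fun n => by unfold mu; positivity
    · filter_upwards [eventually_ge_atTop (j + 1)] with n hn
      by_cases hp : (n - j) % 2 = n % 2
      · obtain ⟨k, hk⟩ : ∃ k, n - j = k + 1 := ⟨n - j - 1, by omega⟩
        have hw := (wmain hr n).2.2.1 k (by omega) (by rw [← hk]; exact hp)
        unfold mu
        rw [hk, hw]
        simp only [Matrix.cons_val_zero, Matrix.cons_val_one, Matrix.head_cons,
          Complex.norm_real, Real.norm_eq_abs, sq_abs]
        have a1 := gam_pos hr (k + 1)
        have a2 : gam r (k + 2) ≤ gam r (k + 1) := gam_succ_le hr (k + 1)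
        have a3 := gam_pos hr (k + 2)
        have c1 := Cp_nonneg hr (k + 1)
        have c2 := Cp_le_one hr (k + 1)
        have c3 := Cp_nonneg hr k
        have c4 := Cp_le_one hr k
        have b1 : gam r (k + 2) * Cp r (k + 1) ≤ gam r (k + 1) := by
          calc gam r (k + 2) * Cp r (k + 1) ≤ gam r (k + 1) * 1 :=
                mul_le_mul a2 c2 c1 a1.le
          _ = gam r (k + 1) := mul_one _
        have b2 : gam r (k + 1) * Cp r k ≤ gam r (k + 1) := by
          calc gam r (k + 1) * Cp r k ≤ gam r (k + 1) * 1 :=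
                mul_le_mul (le_refl _) c4 c3 a1.le
          _ = gam r (k + 1) := mul_one _
        have nb1 : 0 ≤ gam r (k + 2) * Cp r (k + 1) := mul_nonneg a3.le c1
        have nb2 : 0 ≤ gam r (k + 1) * Cp r k := mul_nonneg a1.le c3
        nlinarith [b1, b2, nb1, nb2]
      · have hw := (wmain hr n).1 (n - j) hp
        unfold mu
        rw [hw]
        simp only [Pi.zero_apply, norm_zero]
        have := gam_pos hr (n - j)
        nlinarith
    · exact hg.comp (tendsto_sub_atTop_nat j)
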